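/- Let g : ℝ → ℂ be even, continuous and integrable, with Fourier transform supported in (−1, 1), and with absolutely convergent sum over the integers. Then ∑_{m=0}^∞ ε_m g(m) = ∫₀^∞ g(t) dt, where ε_0 = 1/2 and ε_m = 1 for m ≥ 1. -/

import Mathlib

open Real MeasureTheory Filter FourierTransform

noncomputable def eps (m : ℕ) : ℝ := if m = 0 then 1 / 2 else 1

theorem statement10 (g : ℝ → ℂ) (heven : ∀ t : ℝ, g (-t) = g t)
    (hc : Continuous g) (hi : Integrable g)
    (hsupp : ∀ p : ℝ, p ∉ Set.Ioo (-1 : ℝ) 1 → VectorFourier.fourierIntegral Real.fourierChar volume (innerₗ ℝ) g p = 0)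
    (habs : Summable fun n : ℤ => ‖g n‖) :
    ∑' m : ℕ, (eps m : ℂ) * g m = ∫ t in Set.Ioi (0:ℝ), g t := by
  -- Notation
  set F : ℝ → ℂ := 𝓕 g with hF
  have hFc : Continuous F := by
    exact VectorFourier.fourierIntegral_continuous Real.continuous_fourierChar
      (by exact continuous_inner) hi
  have hFsupp : ∀ p : ℝ, p ∉ Set.Ioo (-1 : ℝ) 1 → F p = 0 := hsupp
  have hFcs : HasCompactSupport F := by
    apply HasCompactSupport.intro (isCompact_Icc (a := (-1:ℝ)) (b := 1))
    intro x hx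
    apply hFsupp
    intro hx'
    exact hx ⟨hx'.1.le, hx'.2.le⟩
  have hFi : Integrable F := hFc.integrable_of_hasCompactSupport hFcs
  have hinv : 𝓕⁻ (𝓕 g) = g := hc.fourierInv_fourier_eq hi hFi
  have hFF : ∀ x : ℝ, 𝓕 F x = g (-x) := by
    intro x
    have : 𝓕 F (- (-x)) = 𝓕⁻ F (-x) := (Real.fourierInv_eq_fourier_neg F (-x)).symm
    rw [neg_neg] at this
    rw [this, hF, hinv]
  -- Poisson summation applied to F
  let Fc : C(ℝ, ℂ) := ⟨F, hFc⟩
  have h_norm : ∀ K : TopologicalSpace.Compacts ℝ,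
      Summable fun n : ℤ => ‖(Fc.comp <| ContinuousMap.addRight n).restrict K‖ := by
    intro K
    obtain ⟨R, hR⟩ : ∃ R : ℝ, (K : Set ℝ) ⊆ Set.Icc (-R) R := by
      obtain ⟨r, hr⟩ := K.isCompact.isBounded.subset_closedBall 0
      exact ⟨r, by simpa [Real.closedBall_eq_Icc] using hr⟩
    apply summable_of_ne_finset_zero (s := Finset.Icc (⌊-R - 1⌋) (⌈R + 1⌉))
    intro n hn
    simp only [Finset.mem_Icc, not_and_or, not_le] at hn
    have hz : (Fc.comp <| ContinuousMap.addRight n).restrict K = 0 := by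
      ext ⟨x, hx⟩
      simp only [ContinuousMap.restrict_apply, ContinuousMap.comp_apply,
        ContinuousMap.coe_addRight, ContinuousMap.coe_mk, ContinuousMap.zero_apply]
      have hx' := hR hx
      apply hFsupp
      intro hmem
      rcases hn with hn | hn
      · have h1 : (n : ℝ) < (⌊-R - 1⌋ : ℤ) := by exact_mod_cast hn
        have h2 : ((⌊-R - 1⌋ : ℤ) : ℝ) ≤ -R - 1 := Int.floor_le _
        linarith [hmem.1, hx'.2]
      · have h1 : ((⌈R + 1⌉ : ℤ) : ℝ) < n := by exact_mod_cast hn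
        have h2 : (R + 1 : ℝ) ≤ ((⌈R + 1⌉ : ℤ) : ℝ) := Int.le_ceil _
        linarith [hmem.2, hx'.1]
    rw [hz, norm_zero]
  have hgsum : Summable fun n : ℤ => g n := Summable.of_norm habs
  have h_sum : Summable fun n : ℤ => 𝓕 (Fc : ℝ → ℂ) n := by
    have hs : Summable fun n : ℤ => g (-(n : ℝ)) := by
      refine (hgsum.comp_injective (neg_injective (G := ℤ))).congr fun n => ?_
      show g (((-n : ℤ) : ℝ)) = g (-(n : ℝ))
      push_cast
      rfl
    refine hs.congr fun n => ?_
    show g (-(n : ℝ)) = 𝓕 F n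
    exact (hFF n).symm
  have key := Real.tsum_eq_tsum_fourier h_norm h_sum 0
  -- simplify both sides of Poisson
  have lhs_eq : ∑' n : ℤ, (Fc : ℝ → ℂ) (0 + n) = F 0 := by
    rw [tsum_eq_single 0]
    · show F (0 + ((0 : ℤ) : ℝ)) = F 0
      norm_num
    · intro n hn
      show F (0 + (n : ℝ)) = 0
      apply hFsupp
      intro hmem
      rcases lt_or_gt_of_ne hn with h | h
      · have : (n : ℝ) ≤ -1 := by exact_mod_cast (by omega : n ≤ -1)
        have := hmem.1
        simp only [zero_add] at this hmem
        linarith [hmem.1]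
      · have : (1 : ℝ) ≤ n := by exact_mod_cast h
        have := hmem.2
        simp only [zero_add] at hmem
        linarith [hmem.2]
  have rhs_eq : ∑' n : ℤ, 𝓕 (Fc : ℝ → ℂ) n * fourier n ((0 : ℝ) : UnitAddCircle)
      = ∑' n : ℤ, g n := by
    have h1 : ∀ n : ℤ, 𝓕 (Fc : ℝ → ℂ) n * fourier n ((0 : ℝ) : UnitAddCircle) = g (-n : ℤ) := by
      intro n
      have : ((0 : ℝ) : UnitAddCircle) = 0 := by norm_cast
      rw [this, fourier_eval_zero, mul_one, show ((Fc : ℝ → ℂ)) = F from rfl, hFF]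
      norm_cast
    simp_rw [h1]
    exact (Equiv.neg ℤ).tsum_eq fun n : ℤ => g n
  have poisson : F 0 = ∑' n : ℤ, g n := by rw [← lhs_eq, key, rhs_eq]
  -- F 0 = ∫ g
  have hF0 : F 0 = ∫ t : ℝ, g t := by
    rw [hF, Real.fourier_eq]
    simp
  -- split the integral
  have hint : (∫ t : ℝ, g t) = 2 * ∫ t in Set.Ioi (0:ℝ), g t := by
    have hsplit := intervalIntegral.integral_Iic_add_Ioi (b := (0:ℝ)) (μ := volume)
      hi.integrableOn hi.integrableOn
    have hneg : (∫ t in Set.Iic (0:ℝ), g t) = ∫ t in Set.Ioi (0:ℝ), g t := by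
      have : (∫ t in Set.Iic (0:ℝ), g t) = ∫ t in Set.Iic (0:ℝ), g (-t) := by
        simp_rw [heven]
      rw [this, integral_comp_neg_Iic, neg_zero]
    rw [← hsplit, hneg]
    ring
  -- split the sum over ℤ
  have hs1 : Summable fun m : ℕ => g m :=
    hgsum.comp_injective (fun a b h => by exact_mod_cast h : Function.Injective ((↑) : ℕ → ℤ))
  have hinj2 : Function.Injective (fun m : ℕ => (-(m + 1) : ℤ)) := by
    intro a b h
    simp only at h
    omega
  have hs2 : Summable fun m : ℕ => g ((-(m + 1) : ℤ)) := hgsum.comp_injective hinj2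
  have hzsplit : ∑' n : ℤ, g n = (∑' m : ℕ, g m) + ∑' m : ℕ, g ((-(m + 1) : ℤ)) :=
    tsum_of_nat_of_neg_add_one hs1 hs2
  have hnegterm : (∑' m : ℕ, g ((-(m + 1) : ℤ))) = ∑' m : ℕ, g (m + 1) := by
    congr 1
    funext m
    push_cast
    rw [heven]
  have hsplit1 : (∑' m : ℕ, g m) = g 0 + ∑' m : ℕ, g (m + 1) := by
    have := Summable.tsum_eq_zero_add hs1
    simpa using this
  -- the eps sum
  have heps_sum : Summable fun m : ℕ => (eps m : ℂ) * g m := by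
    apply Summable.of_norm
    apply Summable.of_nonneg_of_le (fun m => norm_nonneg _) (fun m => ?_)
      (habs.comp_injective (fun a b h => by exact_mod_cast h : Function.Injective ((↑) : ℕ → ℤ)))
    rw [norm_mul]
    have : ‖(eps m : ℂ)‖ ≤ 1 := by
      unfold eps
      split <;> norm_num
    calc ‖(eps m : ℂ)‖ * ‖g m‖ ≤ 1 * ‖g (m : ℤ)‖ := by
          apply mul_le_mul this (le_of_eq ?_) (norm_nonneg _) zero_le_one
          norm_cast
      _ = ‖g (m : ℤ)‖ := one_mul _
  have heps_eq : ∑' m : ℕ, (eps m : ℂ) * g m = (1/2 : ℂ) * g 0 + ∑' m : ℕ, g (m + 1) := by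
    rw [Summable.tsum_eq_zero_add heps_sum]
    congr 1
    · simp [eps]
    · congr 1
      funext m
      have : eps (m + 1) = 1 := by simp [eps]
      rw [this]
      push_cast
      ring_nf
  -- put everything together
  have hfinal : g 0 + 2 * ∑' m : ℕ, g (m + 1) = 2 * ∫ t in Set.Ioi (0:ℝ), g t := by
    have : ∑' n : ℤ, g n = g 0 + 2 * ∑' m : ℕ, g (m + 1) := by
      rw [hzsplit, hnegterm, hsplit1]; push_cast; ring
    rw [← this, ← poisson, hF0, hint]
  rw [heps_eq]
  have : (1/2 : ℂ) * g 0 + ∑' m : ℕ, g (m + 1)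
      = (1/2 : ℂ) * (g 0 + 2 * ∑' m : ℕ, g (m + 1)) := by ring
  rw [this, hfinal]
  push_cast
  ring
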